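/- Let a, r₀, r₂ be positive integers with r₀ ≥ a + 1, r₂ ≥ a + 1, and r₀ + r₂ > a² + a + 1. Let Δ : ℤ → ℤ be the 3-periodic sequence with Δ₁ = Δ₂ = r₀ + r₂ + a and Δ₃ = a·(r₀ + r₂ + a), and let r : ℤ → ℤ satisfy the rank recursion with initial values r(0) = r₀, r(1) = 1, r(2) = r₂. Then for every i ∈ ℤ, r(i) ≥ 1 and Δ_{i−1}·r(i−1) − r(i−2) > 0. (This is the numerical content of the statement that the numerical seed ((−r₀−r₂−a, r₀), (0,1), (r₀+r₂+a, r₂)) generates an elliptic helix.) -/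

import Mathlib

lemma helix_nonneg_of_mul (c t : ℤ) (hc : 0 < c) (h : 0 ≤ c * t) : 0 ≤ t :=
  le_of_mul_le_mul_left (by simpa using h) hc

lemma helix_one (a t u : ℤ) (ha : 1 ≤ a) (ht : 1 ≤ t) (h : 2*a*t ≤ u) : 1 ≤ u := by
  have h1 : 0 ≤ (a-1)*t := mul_nonneg (by linarith) (by linarith)
  nlinarith

lemma helix_lt (a S t u : ℤ) (ha : 1 ≤ a) (hS : 2 ≤ S) (ht : 1 ≤ t) (h : 2*a*t ≤ u) :
    t < S*u := by
  have h1 : 0 ≤ (a-1)*t := mul_nonneg (by linarith) (by linarith)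
  have h2 : 2*u ≤ S*u := mul_le_mul_of_nonneg_right hS (by nlinarith)
  nlinarith

lemma helix_lt2 (c t u : ℤ) (hc : 2 ≤ c) (hu : 1 ≤ u) (h : t ≤ u) : t < c*u := by
  have := mul_le_mul_of_nonneg_right hc (show (0:ℤ) ≤ u by linarith)
  linarith

/-- One mutation step preserves the growth invariant. -/
lemma helix_step (a S x y z x' y' z' : ℤ) (ha : 1 ≤ a) (hS : a^2 + 2*a + 2 ≤ S)
    (hx : 1 ≤ x) (hxy : 2*a*x ≤ y) (hyz : 2*a*y ≤ z)
    (ex : x' = x - S*y + a*S*z) (ey : y' = y - S*z + S*x') (ez : z' = z - a*S*x' + S*y') :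
    1 ≤ x' ∧ 2*a*x' ≤ y' ∧ 2*a*y' ≤ z' ∧ z ≤ x' := by
  have hS4 : 4*a + 1 ≤ S := by nlinarith [sq_nonneg (a-1)]
  have hS0 : (0:ℤ) < S := by nlinarith
  have hy1 : 1 ≤ y := helix_one a x y ha hx hxy
  have hz1 : 1 ≤ z := helix_one a y z ha hy1 hyz
  have m1 : S*(2*a*y) ≤ S*z := mul_le_mul_of_nonneg_left hyz (le_of_lt hS0)
  have m2 : 0 ≤ (2*a^2 - 2)*(S*z) := mul_nonneg (by nlinarith) (by positivity)
  have key : S*z + 2*a*x ≤ 2*a*x' := by nlinarith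
  have hSz : S*z ≥ 4*a+1 := by
    nlinarith [mul_le_mul_of_nonneg_right hS4 (show (0:ℤ) ≤ z by linarith)]
  have hx'1 : 1 ≤ x' := by
    have h0 : 0 ≤ (2*a) * x' := by nlinarith
    have h1 := helix_nonneg_of_mul (2*a) x' (by linarith) h0
    by_contra h
    push_neg at h
    have hx0 : x' = 0 := by omega
    rw [hx0] at key
    nlinarith
  have hzx' : z ≤ x' := by
    have h0 : 0 ≤ (2*a) * (x' - z) := by
      nlinarith [mul_le_mul_of_nonneg_right hS4 (show (0:ℤ) ≤ z by linarith)]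
    have := helix_nonneg_of_mul (2*a) (x' - z) (by linarith) h0
    linarith
  have hyx' : 2*a*x' ≤ y' := by
    have m3 : (S-2*a)*(S*z + 2*a*x) ≤ (S-2*a)*(2*a*x') :=
      mul_le_mul_of_nonneg_left key (by linarith)
    have h0 : 0 ≤ (2*a) * (y' - 2*a*x') := by
      nlinarith [mul_nonneg (show (0:ℤ) ≤ S-4*a by linarith) (show (0:ℤ) ≤ S*z by positivity),
        mul_nonneg (show (0:ℤ) ≤ S-2*a by linarith) (show (0:ℤ) ≤ 2*a*x by positivity)]
    have := helix_nonneg_of_mul (2*a) (y' - 2*a*x') (by linarith) h0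
    linarith
  have hzy' : 2*a*y' ≤ z' := by
    have m4 : (S-2*a)*(2*a*x') ≤ (S-2*a)*y' := mul_le_mul_of_nonneg_left hyx' (by linarith)
    nlinarith [mul_nonneg (mul_nonneg (show (0:ℤ) ≤ a by linarith)
      (show (0:ℤ) ≤ S-4*a by linarith)) (show (0:ℤ) ≤ x' by linarith)]
  exact ⟨hx'1, hyx', hzy', hzx'⟩

/-- The first step out of the seed establishes the invariant. -/
lemma helix_base (a r0 r2 S x1 y1 z1 : ℤ) (ha : 1 ≤ a) (h0 : a+1 ≤ r0) (h2 : a+1 ≤ r2)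
    (hS : S = r0 + r2 + a) (hsum : a^2+a+2 ≤ r0 + r2)
    (ex : x1 = r0 - S*1 + a*S*r2) (ey : y1 = 1 - S*r2 + S*x1) (ez : z1 = r2 - a*S*x1 + S*y1) :
    1 ≤ x1 ∧ 2*a*x1 ≤ y1 ∧ 2*a*y1 ≤ z1 := by
  have hS2 : a^2 + 2*a + 2 ≤ S := by omega
  have hS4 : 4*a + 1 ≤ S := by nlinarith [sq_nonneg (a-1)]
  have hS0 : (0:ℤ) < S := by linarith
  have hx1 : x1 = a*S*r2 - r2 - a := by rw [ex, hS]; ring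
  have c0 : 0 ≤ (a-1)*(S*r2) := mul_nonneg (by linarith) (mul_nonneg (by linarith) (by linarith))
  have c1 : r2*(S-1) - a ≤ x1 := by nlinarith
  have hx1p : 1 ≤ x1 := by nlinarith
  have h1 : 2*a*x1 ≤ y1 := by
    have c2 : 3*x1 ≤ (S-2*a)*x1 :=
      mul_le_mul_of_nonneg_right (by nlinarith) (by linarith)
    have c3 : 5*r2 ≤ S*r2 :=
      mul_le_mul_of_nonneg_right (by nlinarith [sq_nonneg (a-1)]) (by linarith)
    nlinarith
  have h2' : 2*a*y1 ≤ z1 := by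
    have m4 : (S-2*a)*(2*a*x1) ≤ (S-2*a)*y1 := mul_le_mul_of_nonneg_left h1 (by nlinarith)
    nlinarith [mul_nonneg (mul_nonneg (show (0:ℤ) ≤ a by linarith)
      (show (0:ℤ) ≤ S-4*a by linarith)) (show (0:ℤ) ≤ x1 by linarith)]
  exact ⟨hx1p, h1, h2'⟩

/-- The numerical seed `((−r₀−r₂−a, r₀), (0,1), (r₀+r₂+a, r₂))` generates an elliptic
helix: with `Δ₁ = Δ₂ = r₀+r₂+a`, `Δ₃ = a(r₀+r₂+a)` extended 3-periodically and `r`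
satisfying the rank recursion with `r(0) = r₀`, `r(1) = 1`, `r(2) = r₂`, all ranks
`r(i)` are at least 1 and all mutation ranks `Δ_{i−1}·r(i−1) − r(i−2)` are positive. -/
theorem seed_generates_helix_equigen (a r₀ r₂ : ℤ)
    (ha : 1 ≤ a) (h0 : a + 1 ≤ r₀) (h2 : a + 1 ≤ r₂)
    (hsum : a ^ 2 + a + 1 < r₀ + r₂)
    (Δ : ℤ → ℤ) (hΔper : ∀ i : ℤ, Δ (i + 3) = Δ i)
    (hΔ1 : Δ 1 = r₀ + r₂ + a) (hΔ2 : Δ 2 = r₀ + r₂ + a)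
    (hΔ3 : Δ 3 = a * (r₀ + r₂ + a))
    (r : ℤ → ℤ)
    (hrec : ∀ i : ℤ, r (i + 3) = r i - Δ (i + 1) * r (i + 1) + Δ i * r (i + 2))
    (hr0 : r 0 = r₀) (hr1 : r 1 = 1) (hr2 : r 2 = r₂) :
    ∀ i : ℤ, 1 ≤ r i ∧ 0 < Δ (i - 1) * r (i - 1) - r (i - 2) := by
  set S := r₀ + r₂ + a with hSdef
  have hsum' : a^2 + a + 2 ≤ r₀ + r₂ := by
    have := Int.add_one_le_iff.mpr hsum
    linarith
  have hS2 : a^2 + 2*a + 2 ≤ S := by rw [hSdef]; linarith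
  have hS4 : 4*a + 1 ≤ S := by nlinarith [sq_nonneg (a-1)]
  have hS0 : (0:ℤ) < S := by linarith
  have haS : S ≤ a*S := by
    nlinarith [mul_nonneg (show (0:ℤ) ≤ a-1 by linarith) (le_of_lt hS0)]
  have haS2 : (2:ℤ) ≤ a*S := by linarith
  have hΔ0 : Δ 0 = a*S := by
    have h := hΔper 0
    norm_num at h
    rw [← h, hΔ3]
  have hΔmod : ∀ k : ℤ, Δ (3*k) = a*S ∧ Δ (3*k+1) = S ∧ Δ (3*k+2) = S := by
    intro k
    induction k using Int.induction_on with
    | zero => refine ⟨?_, ?_, ?_⟩ <;> norm_num [hΔ0, hΔ1, hΔ2]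
    | succ k ih =>
      have e0 := hΔper (3*(k:ℤ))
      have e1 := hΔper (3*(k:ℤ)+1)
      have e2 := hΔper (3*(k:ℤ)+2)
      refine ⟨?_, ?_, ?_⟩
      · rw [show (3*((k:ℤ)+1)) = 3*(k:ℤ) + 3 by ring, e0]; exact ih.1
      · rw [show (3*((k:ℤ)+1)+1) = (3*(k:ℤ)+1) + 3 by ring, e1]; exact ih.2.1
      · rw [show (3*((k:ℤ)+1)+2) = (3*(k:ℤ)+2) + 3 by ring, e2]; exact ih.2.2
    | pred k ih =>
      have e0 := hΔper (3*(-(k:ℤ)-1))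
      have e1 := hΔper (3*(-(k:ℤ)-1)+1)
      have e2 := hΔper (3*(-(k:ℤ)-1)+2)
      refine ⟨?_, ?_, ?_⟩
      · rw [← e0, show (3*(-(k:ℤ)-1)+3) = 3*(-(k:ℤ)) by ring]; exact ih.1
      · rw [← e1, show (3*(-(k:ℤ)-1)+1+3) = 3*(-(k:ℤ))+1 by ring]; exact ih.2.1
      · rw [← e2, show (3*(-(k:ℤ)-1)+2+3) = 3*(-(k:ℤ))+2 by ring]; exact ih.2.2
  have hrx : ∀ k : ℤ, r (3*k+3) = r (3*k) - S * r (3*k+1) + a*S * r (3*k+2) := by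
    intro k
    have h := hrec (3*k)
    rw [(hΔmod k).2.1, (hΔmod k).1] at h
    exact h
  have hry : ∀ k : ℤ, r (3*k+4) = r (3*k+1) - S * r (3*k+2) + S * r (3*k+3) := by
    intro k
    have h := hrec (3*k+1)
    rw [show (3*k+1+3 : ℤ) = 3*k+4 by ring, show (3*k+1+2 : ℤ) = 3*k+3 by ring,
      show (3*k+1+1 : ℤ) = 3*k+2 by ring, (hΔmod k).2.2, (hΔmod k).2.1] at h
    exact h
  have hrz : ∀ k : ℤ, r (3*k+5) = r (3*k+2) - a*S * r (3*k+3) + S * r (3*k+4) := by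
    intro k
    have h := hrec (3*k+2)
    have hd : Δ (3*k+3) = a*S := by
      have h' := (hΔmod (k+1)).1
      rwa [show (3*(k+1) : ℤ) = 3*k+3 by ring] at h'
    rw [show (3*k+2+3 : ℤ) = 3*k+5 by ring, show (3*k+2+2 : ℤ) = 3*k+4 by ring,
      show (3*k+2+1 : ℤ) = 3*k+3 by ring, hd, (hΔmod k).2.2] at h
    exact h
  -- forward invariant
  have hP : ∀ n : ℤ, 1 ≤ n →
      (1 ≤ r (3*n) ∧ 2*a*r (3*n) ≤ r (3*n+1) ∧ 2*a*r (3*n+1) ≤ r (3*n+2)) := by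
    refine fun n hn => Int.le_induction
      (motive := fun n _ => 1 ≤ r (3*n) ∧ 2*a*r (3*n) ≤ r (3*n+1) ∧ 2*a*r (3*n+1) ≤ r (3*n+2))
      ?_ ?_ n hn
    · have e1 := hrx 0
      have e2 := hry 0
      have e3 := hrz 0
      norm_num at e1 e2 e3
      rw [hr0, hr1, hr2] at e1
      rw [hr1, hr2] at e2
      rw [hr2] at e3
      have e1' : r 3 = r₀ - S*1 + a*S*r₂ := by linarith
      have e2' : r 4 = 1 - S*r₂ + S*(r 3) := by linarith
      have e3' : r 5 = r₂ - a*S*(r 3) + S*(r 4) := by linarith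
      have base := helix_base a r₀ r₂ S (r 3) (r 4) (r 5) ha h0 h2 hSdef hsum' e1' e2' e3'
      refine ⟨?_, ?_, ?_⟩ <;> norm_num
      · linarith [base.1]
      · linarith [base.2.1]
      · linarith [base.2.2]
    · intro k hk ih
      have step := helix_step a S (r (3*k)) (r (3*k+1)) (r (3*k+2)) (r (3*k+3)) (r (3*k+4))
        (r (3*k+5)) ha hS2 ih.1 ih.2.1 ih.2.2 (hrx k) (hry k) (hrz k)
      refine ⟨?_, ?_, ?_⟩
      · rw [show (3*(k+1) : ℤ) = 3*k+3 by ring]; exact step.1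
      · rw [show (3*(k+1)+1 : ℤ) = 3*k+4 by ring, show (3*(k+1) : ℤ) = 3*k+3 by ring]
        exact step.2.1
      · rw [show (3*(k+1)+2 : ℤ) = 3*k+5 by ring, show (3*(k+1)+1 : ℤ) = 3*k+4 by ring]
        exact step.2.2.1
  -- backward invariant (with the cross inequality)
  have hQ : ∀ n : ℤ, n ≤ -1 →
      (1 ≤ r (3*n+2) ∧ 2*a*r (3*n+2) ≤ r (3*n+1) ∧ 2*a*r (3*n+1) ≤ r (3*n)
        ∧ r (3*n+3) ≤ r (3*n+2)) := by
    refine fun n hn => Int.le_induction_down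
      (motive := fun n _ => 1 ≤ r (3*n+2) ∧ 2*a*r (3*n+2) ≤ r (3*n+1) ∧ 2*a*r (3*n+1) ≤ r (3*n)
        ∧ r (3*n+3) ≤ r (3*n+2))
      ?_ ?_ n hn
    · have e1 := hrx (-1)
      have e2 := hry (-1)
      have e3 := hrz (-1)
      norm_num at e1 e2 e3
      rw [hr0] at e1
      rw [hr1, hr0] at e2
      rw [hr2, hr0, hr1] at e3
      have ex' : r (-1) = r₂ - S*1 + a*S*r₀ := by linarith
      have ey' : r (-2) = 1 - S*r₀ + S*(r (-1)) := by linarith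
      have ez' : r (-3) = r₀ - a*S*(r (-1)) + S*(r (-2)) := by linarith
      have base := helix_base a r₂ r₀ S (r (-1)) (r (-2)) (r (-3)) ha h2 h0 (by omega)
        (by linarith) ex' ey' ez'
      have cross : r 0 ≤ r (-1) := by
        rw [hr0, ex']
        nlinarith [mul_nonneg (mul_nonneg (show (0:ℤ) ≤ a-1 by linarith)
          (show (0:ℤ) ≤ S by linarith)) (show (0:ℤ) ≤ r₀ by linarith),
          mul_le_mul_of_nonneg_right (show (1:ℤ) ≤ S by linarith)
          (show (0:ℤ) ≤ r₀ - 1 by linarith)]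
      refine ⟨?_, ?_, ?_, ?_⟩ <;> norm_num
      · linarith [base.1]
      · linarith [base.2.1]
      · linarith [base.2.2]
      · linarith [cross]
    · intro k hk ih
      have eX : r (3*k-1) = r (3*k+2) - S * r (3*k+1) + a*S * r (3*k) := by
        have h := hrz (k-1)
        rw [show (3*(k-1)+5 : ℤ) = 3*k+2 by ring, show (3*(k-1)+4 : ℤ) = 3*k+1 by ring,
          show (3*(k-1)+3 : ℤ) = 3*k by ring, show (3*(k-1)+2 : ℤ) = 3*k-1 by ring] at h
        linarith
      have eY : r (3*k-2) = r (3*k+1) - S * r (3*k) + S * r (3*k-1) := by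
        have h := hry (k-1)
        rw [show (3*(k-1)+4 : ℤ) = 3*k+1 by ring, show (3*(k-1)+3 : ℤ) = 3*k by ring,
          show (3*(k-1)+2 : ℤ) = 3*k-1 by ring, show (3*(k-1)+1 : ℤ) = 3*k-2 by ring] at h
        linarith
      have eZ : r (3*k-3) = r (3*k) - a*S * r (3*k-1) + S * r (3*k-2) := by
        have h := hrx (k-1)
        rw [show (3*(k-1)+3 : ℤ) = 3*k by ring, show (3*(k-1)+2 : ℤ) = 3*k-1 by ring,
          show (3*(k-1)+1 : ℤ) = 3*k-2 by ring, show (3*(k-1) : ℤ) = 3*k-3 by ring] at h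
        linarith
      have step := helix_step a S (r (3*k+2)) (r (3*k+1)) (r (3*k)) (r (3*k-1)) (r (3*k-2))
        (r (3*k-3)) ha hS2 ih.1 ih.2.1 ih.2.2.1 eX eY eZ
      refine ⟨?_, ?_, ?_, ?_⟩
      · rw [show (3*(k-1)+2 : ℤ) = 3*k-1 by ring]; exact step.1
      · rw [show (3*(k-1)+2 : ℤ) = 3*k-1 by ring, show (3*(k-1)+1 : ℤ) = 3*k-2 by ring]
        exact step.2.1
      · rw [show (3*(k-1)+1 : ℤ) = 3*k-2 by ring, show (3*(k-1) : ℤ) = 3*k-3 by ring]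
        exact step.2.2.1
      · rw [show (3*(k-1)+3 : ℤ) = 3*k by ring, show (3*(k-1)+2 : ℤ) = 3*k-1 by ring]
        exact step.2.2.2
  -- master statement at every k ∈ ℤ
  have hM : ∀ k : ℤ, (1 ≤ r (3*k) ∧ 1 ≤ r (3*k+1) ∧ 1 ≤ r (3*k+2)) ∧
      r (3*k) < S * r (3*k+1) ∧ r (3*k+1) < S * r (3*k+2) ∧ r (3*k+2) < a*S * r (3*k+3) := by
    intro k
    rcases lt_trichotomy k 0 with hk | hk | hk
    · -- k ≤ -1
      have hk' : k ≤ -1 := by omega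
      have Qk := hQ k hk'
      have hz1 : 1 ≤ r (3*k+2) := Qk.1
      have hy1 : 1 ≤ r (3*k+1) := helix_one a (r (3*k+2)) (r (3*k+1)) ha hz1 Qk.2.1
      have hx1 : 1 ≤ r (3*k) := helix_one a (r (3*k+1)) (r (3*k)) ha hy1 Qk.2.2.1
      have c4 : r (3*k) < S * r (3*k+1) := by
        have h1 : r (3*k+3) < a*S * r (3*k+2) :=
          helix_lt2 (a*S) (r (3*k+3)) (r (3*k+2)) haS2 hz1 Qk.2.2.2
        have h := hrx k
        linarith
      have c5 : r (3*k+1) < S * r (3*k+2) := by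
        have h1 : r (3*k+4) < S * r (3*k+3) := by
          rcases eq_or_lt_of_le hk' with he | hlt
          · subst he
            norm_num
            rw [hr1, hr0]
            exact helix_lt2 S 1 r₀ (by linarith) (by linarith) (by linarith)
          · have q := hQ (k+1) (by omega)
            rw [show (3*(k+1)+2 : ℤ) = 3*k+5 by ring, show (3*(k+1)+1 : ℤ) = 3*k+4 by ring,
              show (3*(k+1)+3 : ℤ) = 3*k+6 by ring, show (3*(k+1) : ℤ) = 3*k+3 by ring] at q
            have hy4 : 1 ≤ r (3*k+4) := helix_one a (r (3*k+5)) (r (3*k+4)) ha q.1 q.2.1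
            exact helix_lt a S (r (3*k+4)) (r (3*k+3)) ha (by linarith) hy4 q.2.2.1
        have h := hry k
        linarith
      have c6 : r (3*k+2) < a*S * r (3*k+3) := by
        have h1 : r (3*k+5) < S * r (3*k+4) := by
          rcases eq_or_lt_of_le hk' with he | hlt
          · subst he
            norm_num
            rw [hr2, hr1]
            have : S*1 = S := by ring
            rw [this, hSdef]
            linarith
          · have q := hQ (k+1) (by omega)
            rw [show (3*(k+1)+2 : ℤ) = 3*k+5 by ring, show (3*(k+1)+1 : ℤ) = 3*k+4 by ring,
              show (3*(k+1)+3 : ℤ) = 3*k+6 by ring, show (3*(k+1) : ℤ) = 3*k+3 by ring] at q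
            exact helix_lt a S (r (3*k+5)) (r (3*k+4)) ha (by linarith) q.1 q.2.1
        have h := hrz k
        linarith
      exact ⟨⟨hx1, hy1, hz1⟩, c4, c5, c6⟩
    · -- k = 0
      subst hk
      have p := hP 1 le_rfl
      norm_num at p ⊢
      rw [hr0, hr1, hr2]
      have hr3 : 1 ≤ r 3 := p.1
      have hc6 : r₂ < a*S * r 3 := by
        have h := mul_le_mul_of_nonneg_left hr3 (show (0:ℤ) ≤ a*S by linarith)
        have h2' : a*S*1 = a*S := by ring
        rw [h2'] at h
        have : r₂ < S := by rw [hSdef]; linarith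
        linarith
      refine ⟨⟨by linarith, by norm_num, by linarith⟩, ?_, ?_, hc6⟩
      · have : S*1 = S := by ring
        rw [this, hSdef]
        linarith
      · exact helix_lt2 S 1 r₂ (by linarith) (by linarith) (by linarith)
    · -- k ≥ 1
      have hk' : 1 ≤ k := hk
      have Pk := hP k hk'
      have hx1 : 1 ≤ r (3*k) := Pk.1
      have hy1 : 1 ≤ r (3*k+1) := helix_one a (r (3*k)) (r (3*k+1)) ha hx1 Pk.2.1
      have hz1 : 1 ≤ r (3*k+2) := helix_one a (r (3*k+1)) (r (3*k+2)) ha hy1 Pk.2.2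
      have step := helix_step a S (r (3*k)) (r (3*k+1)) (r (3*k+2)) (r (3*k+3)) (r (3*k+4))
        (r (3*k+5)) ha hS2 Pk.1 Pk.2.1 Pk.2.2 (hrx k) (hry k) (hrz k)
      have c4 : r (3*k) < S * r (3*k+1) :=
        helix_lt a S (r (3*k)) (r (3*k+1)) ha (by linarith) hx1 Pk.2.1
      have c5 : r (3*k+1) < S * r (3*k+2) :=
        helix_lt a S (r (3*k+1)) (r (3*k+2)) ha (by linarith) hy1 Pk.2.2
      have c6 : r (3*k+2) < a*S * r (3*k+3) :=
        helix_lt2 (a*S) (r (3*k+2)) (r (3*k+3)) haS2 step.1 step.2.2.2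
      exact ⟨⟨hx1, hy1, hz1⟩, c4, c5, c6⟩
  -- conclude
  intro i
  have hj : i % 3 = 0 ∨ i % 3 = 1 ∨ i % 3 = 2 := by omega
  rcases hj with hj | hj | hj
  · obtain ⟨k, rfl⟩ : ∃ k, i = 3*k := ⟨i/3, by omega⟩
    have hd : Δ (3*k-1) = S := by
      rw [show (3*k-1 : ℤ) = 3*(k-1)+2 by ring]
      exact (hΔmod (k-1)).2.2
    have hC := (hM (k-1)).2.2.1
    refine ⟨(hM k).1.1, ?_⟩
    rw [hd, show (3*k-1 : ℤ) = 3*(k-1)+2 by ring, show (3*k-2 : ℤ) = 3*(k-1)+1 by ring]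
    linarith
  · obtain ⟨k, rfl⟩ : ∃ k, i = 3*k+1 := ⟨i/3, by omega⟩
    have hd : Δ (3*k+1-1) = a*S := by
      rw [show (3*k+1-1 : ℤ) = 3*k by ring]
      exact (hΔmod k).1
    have hC := (hM (k-1)).2.2.2
    rw [show (3*(k-1)+3 : ℤ) = 3*k by ring] at hC
    refine ⟨(hM k).1.2.1, ?_⟩
    rw [hd, show (3*k+1-1 : ℤ) = 3*k by ring, show (3*k+1-2 : ℤ) = 3*(k-1)+2 by ring]
    linarith
  · obtain ⟨k, rfl⟩ : ∃ k, i = 3*k+2 := ⟨i/3, by omega⟩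
    have hd : Δ (3*k+2-1) = S := by
      rw [show (3*k+2-1 : ℤ) = 3*k+1 by ring]
      exact (hΔmod k).2.1
    have hC := (hM k).2.1
    refine ⟨(hM k).1.2.2, ?_⟩
    rw [hd, show (3*k+2-1 : ℤ) = 3*k+1 by ring, show (3*k+2-2 : ℤ) = 3*k by ring]
    linarith
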